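/- Over the alphabet Σ = {c_1,...,c_σ} partitioned into σ/α blocks of α consecutive symbols, let T be the concatenation of De Bruijn sequences of order 2 of the blocks (so |T| = σα and every symbol occurs exactly α times). For each symbol c, the segment L_c of BWT(T) corresponding to rows of the BWT matrix prefixed by c has length exactly α and consists of α pairwise distinct symbols. -/

import Mathlib

lemma flatMap_len (D : ℕ → List ℕ) (m : ℕ) :
    ∀ n, (∀ i < n, (D i).length = m) → ((List.range n).flatMap D).length = n * m := by
  intro n
  induction n with
  | zero => simp
  | succ k ih =>
    intro h
    rw [List.range_succ, List.flatMap_append]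
    simp [ih (fun i hi => h i (by omega)), h k (by omega), Nat.succ_mul]

lemma flatMap_getD (D : ℕ → List ℕ) (m : ℕ) :
    ∀ n, (∀ i < n, (D i).length = m) → ∀ j, j < n * m →
      ((List.range n).flatMap D).getD j 0 = (D (j / m)).getD (j % m) 0 := by
  intro n
  induction n with
  | zero => intro _ j hj; omega
  | succ k ih =>
    intro h j hj
    have hsm : (k+1) * m = k * m + m := by ring
    have hj' : j < k * m + m := by rw [Nat.succ_mul] at hj; exact hj
    have hm : 0 < m := by
      rcases Nat.eq_zero_or_pos m with h0 | h0
      · subst h0; simp at hj'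
      · exact h0
    rw [List.range_succ, List.flatMap_append]
    have hlen := flatMap_len D m k (fun i hi => h i (by omega))
    by_cases hjk : j < k * m
    · rw [List.getD_append _ _ _ _ (by omega)]
      exact ih (fun i hi => h i (by omega)) j hjk
    · have hle : k * m ≤ j := by omega
      have hq : j / m = k := Nat.div_eq_of_lt_le (by omega) (by omega)
      have hr := Nat.mod_add_div j m
      rw [hq, Nat.mul_comm] at hr
      have hrr : j % m = j - k * m := by omega
      rw [List.getD_append_right _ _ _ _ (by omega)]
      simp only [List.flatMap_cons, List.flatMap_nil, List.append_nil, hlen, hq, hrr]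

lemma filterMap_ite {β : Type} (P : ℕ → Prop) [DecidablePred P] (g : ℕ → β) :
    ∀ (L : List ℕ), (L.filterMap fun x => if P x then some (g x) else none)
      = (L.filter fun x => decide (P x)).map g := by
  intro L
  induction L with
  | nil => rfl
  | cons x xs ih =>
    by_cases h : P x <;> simp [List.filterMap_cons, List.filter_cons, h, ih]

lemma length_filter_range (N : ℕ) (P : ℕ → Prop) [DecidablePred P] :
    ((List.range N).filter (fun j => decide (P j))).length = ((Finset.range N).filter P).card := by
  rfl

/-- Let the alphabet `{0,…,l·a−1}` (symbols encoded as naturals,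
`σ = l·a`) be partitioned into `l` blocks of `a` consecutive symbols (the block of
`x` is `x / a`).  For each block `i < l`, let `D i` be a (linearized circular)
De Bruijn sequence of order 2 over block `i`: it has length `a²`, uses only symbols
of block `i`, and every ordered pair of symbols of block `i` occurs exactly once as
a cyclic factor.  Let `T = D 0 ++ D 1 ++ ⋯ ++ D (l−1)` (so `|T| = l·a²` and every
symbol occurs exactly `a` times).  For each symbol `c`, the portion `L_c` of
`BWT(T)` corresponding to the rows of the BWT matrix prefixed by `c` — i.e. the
multiset of cyclic predecessors of the occurrences of `c` in `T`, here listed in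
text order — has length exactly `a` and consists of pairwise distinct symbols. -/
theorem debruijn_bwt_segments (a l : ℕ) (ha : 1 < a) (hl : 0 < l)
    (D : ℕ → List ℕ)
    (hlen : ∀ i < l, (D i).length = a * a)
    (halph : ∀ i < l, ∀ x ∈ D i, a * i ≤ x ∧ x < a * (i + 1))
    (hdebruijn : ∀ i < l, ∀ x y, a * i ≤ x → x < a * (i + 1) → a * i ≤ y →
      y < a * (i + 1) →
      ((Finset.range (a * a)).filter fun j =>
          (D i).getD (j % (a * a)) 0 = x ∧ (D i).getD ((j + 1) % (a * a)) 0 = y).card = 1)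
    (T : List ℕ) (hT : T = (List.range l).flatMap D) :
    ∀ c < l * a,
      ((List.range T.length).filterMap fun j =>
          if T.getD j 0 = c then some (T.getD ((j + T.length - 1) % T.length) 0)
          else none).length = a ∧
      ((List.range T.length).filterMap fun j =>
          if T.getD j 0 = c then some (T.getD ((j + T.length - 1) % T.length) 0)
          else none).Nodup := by
  intro c hc
  have ha0 : 0 < a := by omega
  have hm : 0 < a * a := Nat.mul_pos ha0 ha0
  have hlm : 0 < l * (a * a) := Nat.mul_pos hl hm
  have hdmc := Nat.div_add_mod c a
  have hmodc : c % a < a := Nat.mod_lt c ha0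
  have hc1 : a * (c / a) ≤ c := by omega
  have hc2 : c < a * (c / a + 1) := by
    have e : a * (c / a + 1) = a * (c / a) + a := by ring
    omega
  have hil : c / a < l := by
    have e2 : a * l = l * a := Nat.mul_comm a l
    exact Nat.lt_of_mul_lt_mul_left (a := a) (by omega)
  have hNlen : T.length = l * (a * a) := by rw [hT]; exact flatMap_len D (a * a) l hlen
  have hTget : ∀ j < l * (a * a), T.getD j 0 = (D (j / (a * a))).getD (j % (a * a)) 0 := by
    intro j hj; rw [hT]; exact flatMap_getD D (a * a) l hlen j hj
  have hblock : ∀ q < l, ∀ r < a * a,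
      a * q ≤ (D q).getD r 0 ∧ (D q).getD r 0 < a * (q + 1) := by
    intro q hq r hr
    apply halph q hq
    have hrl : r < (D q).length := by rw [hlen q hq]; exact hr
    rw [List.getD_eq_getElem _ _ hrl]
    exact List.getElem_mem hrl
  have hocc : ∀ j, j < l * (a * a) → T.getD j 0 = c → j / (a * a) = c / a := by
    intro j hj hjc
    have hq : j / (a * a) < l := (Nat.div_lt_iff_lt_mul hm).mpr hj
    have hr : j % (a * a) < a * a := Nat.mod_lt _ hm
    have hb := hblock _ hq _ hr
    rw [hTget j hj] at hjc
    rw [hjc] at hb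
    have e1 : a * (j / (a * a) + 1) = a * (j / (a * a)) + a := by ring
    have h1 : j / (a * a) < c / a + 1 := Nat.lt_of_mul_lt_mul_left (a := a) (by omega)
    have h2 : c / a < j / (a * a) + 1 := Nat.lt_of_mul_lt_mul_left (a := a) (by omega)
    omega
  have hpred : ∀ j, 0 < j → j < l * (a * a) →
      (j + T.length - 1) % T.length = j - 1 := by
    intro j h0 hj
    rw [hNlen]
    have e : j + l * (a * a) - 1 = l * (a * a) + (j - 1) := by omega
    rw [e, Nat.add_mod_left, Nat.mod_eq_of_lt (by omega)]
  have hpred0 : (0 + T.length - 1) % T.length = l * (a * a) - 1 := by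
    rw [hNlen]
    have e : 0 + l * (a * a) - 1 = l * (a * a) - 1 := by omega
    rw [e, Nat.mod_eq_of_lt (by omega)]
  have hdm : ∀ q r, r < a * a →
      (q * (a * a) + r) / (a * a) = q ∧ (q * (a * a) + r) % (a * a) = r := by
    intro q r hr
    constructor
    · rw [Nat.mul_comm q, Nat.mul_add_div hm, Nat.div_eq_of_lt hr]
      omega
    · rw [Nat.mul_comm q, Nat.mul_add_mod, Nat.mod_eq_of_lt hr]

  have hbound : ∀ q r, q < l → r < a * a → q * (a * a) + r < l * (a * a) := by
    intro q r hq hr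
    calc q * (a * a) + r < q * (a * a) + a * a := by omega
      _ = (q + 1) * (a * a) := by ring
      _ ≤ l * (a * a) := Nat.mul_le_mul_right _ (by omega)
  have hsub : a * a - 1 < a * a := Nat.sub_lt hm Nat.one_pos
  have hsucc : ∀ r < a * a, (((r + a * a - 1) % (a * a)) + 1) % (a * a) = r := by
    intro r hr
    by_cases h0 : r = 0
    · subst h0
      have e : 0 + a * a - 1 = a * a - 1 := by omega
      have e1 : (a * a - 1) % (a * a) = a * a - 1 := Nat.mod_eq_of_lt hsub
      rw [e, e1]
      have e2 : a * a - 1 + 1 = a * a := by omega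
      rw [e2, Nat.mod_self]
    · have e : r + a * a - 1 = a * a + (r - 1) := by omega
      have e1 : (a * a + (r - 1)) % (a * a) = r - 1 := by
        rw [Nat.add_mod_left]
        exact Nat.mod_eq_of_lt (by omega)
      rw [e, e1]
      have e2 : r - 1 + 1 = r := by omega
      rw [e2, Nat.mod_eq_of_lt hr]
  have hkey : ∀ j, j < l * (a * a) → T.getD j 0 = c → (0 < j % (a * a) ∨ l = 1) →
      T.getD ((j + T.length - 1) % T.length) 0
        = (D (c / a)).getD ((j % (a * a) + a * a - 1) % (a * a)) 0 := by
    intro j hj hjc hcase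
    have hqi := hocc j hj hjc
    have hrm : j % (a * a) < a * a := Nat.mod_lt _ hm
    have hj' := Nat.div_add_mod j (a * a)
    rw [hqi] at hj'
    by_cases h0 : 0 < j % (a * a)
    · have hjpos : 0 < j := by omega
      rw [hpred j hjpos hj]
      rw [hTget (j - 1) (by omega)]
      have e1 : j - 1 = (c / a) * (a * a) + (j % (a * a) - 1) := by
        rw [Nat.mul_comm]; omega
      have hd := hdm (c / a) (j % (a * a) - 1) (by omega)
      rw [e1, hd.1, hd.2]
      have e2 : (j % (a * a) + a * a - 1) % (a * a) = j % (a * a) - 1 := by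
        have e : j % (a * a) + a * a - 1 = a * a + (j % (a * a) - 1) := by omega
        rw [e, Nat.add_mod_left]
        exact Nat.mod_eq_of_lt (lt_of_le_of_lt (Nat.sub_le _ _) hrm)
      rw [e2]
    · have hl1 : l = 1 := hcase.resolve_left h0
      have hi0 : c / a = 0 := Nat.lt_one_iff.mp (hl1 ▸ hil)
      have hj0 : j = 0 := by rw [hi0] at hj'; omega
      rw [hj0, hpred0, hTget _ (by omega)]
      have e3 : l * (a * a) - 1 = 0 * (a * a) + (a * a - 1) := by
        rw [hl1]; omega
      have hd := hdm 0 (a * a - 1) (by omega)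
      rw [e3, hd.1, hd.2, hi0]
      have e4 : (0 % (a * a) + a * a - 1) % (a * a) = a * a - 1 := by
        rw [Nat.zero_mod]
        have e6 : 0 + a * a - 1 = a * a - 1 := by omega
        rw [e6]
        exact Nat.mod_eq_of_lt hsub
      rw [e4]
  have hbad : ∀ j, j < l * (a * a) → T.getD j 0 = c → j % (a * a) = 0 → 1 < l →
      ∃ b, b < l ∧ b ≠ c / a ∧
        a * b ≤ T.getD ((j + T.length - 1) % T.length) 0 ∧
        T.getD ((j + T.length - 1) % T.length) 0 < a * (b + 1) := by
    intro j hj hjc hr0 hl2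
    have hqi := hocc j hj hjc
    have hj' := Nat.div_add_mod j (a * a)
    rw [hqi] at hj'
    by_cases hi0 : c / a = 0
    · have hj0 : j = 0 := by rw [hi0] at hj'; omega
      have hv : T.getD ((j + T.length - 1) % T.length) 0
          = (D (l - 1)).getD (a * a - 1) 0 := by
        rw [hj0, hpred0, hTget _ (by omega)]
        have e0 : (l - 1) * (a * a) + a * a = l * (a * a) := by
          have e1 : (l - 1) * (a * a) + a * a = (l - 1 + 1) * (a * a) := by ring
          rw [e1]; congr 1; omega
        have e : l * (a * a) - 1 = (l - 1) * (a * a) + (a * a - 1) := by omega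
        have hd := hdm (l - 1) (a * a - 1) (by omega)
        rw [e, hd.1, hd.2]
      rw [hv]
      exact ⟨l - 1, by omega, by omega,
        (hblock (l - 1) (by omega) (a * a - 1) (by omega)).1,
        (hblock (l - 1) (by omega) (a * a - 1) (by omega)).2⟩
    · have hipos : 0 < c / a := Nat.pos_of_ne_zero hi0
      have e1 : j = (c / a) * (a * a) := by rw [Nat.mul_comm]; omega
      have hjpos : 0 < j := by
        rw [e1]; exact Nat.mul_pos hipos hm
      have hv : T.getD ((j + T.length - 1) % T.length) 0
          = (D (c / a - 1)).getD (a * a - 1) 0 := by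
        rw [hpred j hjpos hj, hTget _ (by omega)]
        have e0 : (c / a - 1) * (a * a) + a * a = (c / a) * (a * a) := by
          have e2 : (c / a - 1) * (a * a) + a * a = (c / a - 1 + 1) * (a * a) := by ring
          rw [e2]; congr 1; omega
        have e : j - 1 = (c / a - 1) * (a * a) + (a * a - 1) := by omega
        have hd := hdm (c / a - 1) (a * a - 1) (by omega)
        rw [e, hd.1, hd.2]
      rw [hv]
      exact ⟨c / a - 1, by omega, by omega,
        (hblock (c / a - 1) (by omega) (a * a - 1) (by omega)).1,
        (hblock (c / a - 1) (by omega) (a * a - 1) (by omega)).2⟩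
  have hcard1 : ∀ y, a * (c / a) ≤ y → y < a * (c / a + 1) →
      ((Finset.range (a * a)).filter fun p =>
        (D (c / a)).getD p 0 = y ∧ (D (c / a)).getD ((p + 1) % (a * a)) 0 = c).card = 1 := by
    intro y hy1 hy2
    have h := hdebruijn (c / a) hil y c hy1 hy2 hc1 hc2
    have heq : ((Finset.range (a * a)).filter fun j =>
          (D (c / a)).getD (j % (a * a)) 0 = y ∧ (D (c / a)).getD ((j + 1) % (a * a)) 0 = c)
        = ((Finset.range (a * a)).filter fun p =>
          (D (c / a)).getD p 0 = y ∧ (D (c / a)).getD ((p + 1) % (a * a)) 0 = c) :=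
      Finset.filter_congr (fun p hp => by
        rw [Nat.mod_eq_of_lt (Finset.mem_range.mp hp)])
    rw [← heq]
    exact h
  have huniq : ∀ y, a * (c / a) ≤ y → y < a * (c / a + 1) → ∀ p p', p < a * a → p' < a * a →
      (D (c / a)).getD p 0 = y → (D (c / a)).getD ((p + 1) % (a * a)) 0 = c →
      (D (c / a)).getD p' 0 = y → (D (c / a)).getD ((p' + 1) % (a * a)) 0 = c → p = p' := by
    intro y h1 h2 p p' hp hp' e1 e2 e3 e4
    have h := hcard1 y h1 h2
    exact Finset.card_le_one.mp (le_of_eq h) p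
      (by simp only [Finset.mem_filter, Finset.mem_range]; exact ⟨hp, e1, e2⟩) p'
      (by simp only [Finset.mem_filter, Finset.mem_range]; exact ⟨hp', e3, e4⟩)
  have hcard2 : ∀ y, a * (c / a) ≤ y → y < a * (c / a + 1) →
      ((Finset.range (a * a)).filter fun p =>
        (D (c / a)).getD p 0 = c ∧ (D (c / a)).getD ((p + 1) % (a * a)) 0 = y).card = 1 := by
    intro y hy1 hy2
    have h := hdebruijn (c / a) hil c y hc1 hc2 hy1 hy2
    have heq : ((Finset.range (a * a)).filter fun j =>
          (D (c / a)).getD (j % (a * a)) 0 = c ∧ (D (c / a)).getD ((j + 1) % (a * a)) 0 = y)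
        = ((Finset.range (a * a)).filter fun p =>
          (D (c / a)).getD p 0 = c ∧ (D (c / a)).getD ((p + 1) % (a * a)) 0 = y) :=
      Finset.filter_congr (fun p hp => by
        rw [Nat.mod_eq_of_lt (Finset.mem_range.mp hp)])
    rw [← heq]
    exact h
  have hS : ((Finset.range (a * a)).filter fun r => (D (c / a)).getD r 0 = c).card = a := by
    have hmem : ∀ r ∈ (Finset.range (a * a)).filter (fun r => (D (c / a)).getD r 0 = c),
        (D (c / a)).getD ((r + 1) % (a * a)) 0 ∈ Finset.Ico (a * (c / a)) (a * (c / a + 1)) := by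
      intro r _
      have := hblock (c / a) hil ((r + 1) % (a * a)) (Nat.mod_lt _ hm)
      rw [Finset.mem_Ico]
      exact this
    rw [Finset.card_eq_sum_card_fiberwise hmem]
    have hone : ∀ y ∈ Finset.Ico (a * (c / a)) (a * (c / a + 1)),
        (((Finset.range (a * a)).filter fun r => (D (c / a)).getD r 0 = c).filter
          fun r => (D (c / a)).getD ((r + 1) % (a * a)) 0 = y).card = 1 := by
      intro y hy
      rw [Finset.mem_Ico] at hy
      rw [Finset.filter_filter]
      exact hcard2 y hy.1 hy.2
    rw [Finset.sum_congr rfl hone, Finset.sum_const, smul_eq_mul, mul_one, Nat.card_Ico]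
    have e : a * (c / a + 1) = a * (c / a) + a := by ring
    omega
  have hFS : ((Finset.range (l * (a * a))).filter fun j => T.getD j 0 = c).card
      = ((Finset.range (a * a)).filter fun r => (D (c / a)).getD r 0 = c).card := by
    apply Finset.card_bij' (i := fun j _ => j % (a * a)) (j := fun r _ => (c / a) * (a * a) + r)
    · intro j hj
      rw [Finset.mem_filter, Finset.mem_range] at hj
      rw [Finset.mem_filter, Finset.mem_range]
      refine ⟨Nat.mod_lt _ hm, ?_⟩
      have := hTget j hj.1
      rw [hocc j hj.1 hj.2] at this
      rw [← this]; exact hj.2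
    · intro r hr
      rw [Finset.mem_filter, Finset.mem_range] at hr
      rw [Finset.mem_filter, Finset.mem_range]
      have hb := hbound (c / a) r hil hr.1
      refine ⟨hb, ?_⟩
      have hd := hdm (c / a) r hr.1
      rw [hTget _ hb, hd.1, hd.2]
      exact hr.2
    · intro j hj
      rw [Finset.mem_filter, Finset.mem_range] at hj
      have h1 := Nat.div_add_mod j (a * a)
      rw [hocc j hj.1 hj.2] at h1
      have h2 : (c / a) * (a * a) = (a * a) * (c / a) := Nat.mul_comm _ _
      show (c / a) * (a * a) + j % (a * a) = j
      rw [h2]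
      exact h1
    · intro r hr
      rw [Finset.mem_filter, Finset.mem_range] at hr
      exact (hdm (c / a) r hr.1).2
  have hF : ((Finset.range (l * (a * a))).filter fun j => T.getD j 0 = c).card = a :=
    hFS.trans hS
  have hrw : ((List.range T.length).filterMap fun j =>
        if T.getD j 0 = c then some (T.getD ((j + T.length - 1) % T.length) 0)
        else none)
      = ((List.range T.length).filter fun j => decide (T.getD j 0 = c)).map
          (fun j => T.getD ((j + T.length - 1) % T.length) 0) :=
    filterMap_ite _ _ _
  have hrw2 : ((List.range T.length).filter fun j => decide (T.getD j 0 = c)).length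
      = ((Finset.range T.length).filter fun j => T.getD j 0 = c).card :=
    length_filter_range _ _
  constructor
  · rw [hrw, List.length_map, hrw2, hNlen]
    exact hF
  · rw [hrw]
    apply List.Nodup.map_on ?_ (List.Nodup.filter _ List.nodup_range)
    intro j hj j' hj' hgg
    rw [List.mem_filter, List.mem_range, decide_eq_true_eq] at hj hj'
    obtain ⟨hjN, hjc⟩ := hj
    obtain ⟨hj'N, hj'c⟩ := hj'
    rw [hNlen] at hjN hj'N
    have hrj := Nat.div_add_mod j (a * a)
    rw [hocc j hjN hjc] at hrj
    have hrj' := Nat.div_add_mod j' (a * a)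
    rw [hocc j' hj'N hj'c] at hrj'
    have hrm : j % (a * a) < a * a := Nat.mod_lt _ hm
    have hr'm : j' % (a * a) < a * a := Nat.mod_lt _ hm
    suffices hr : j % (a * a) = j' % (a * a) by omega
    by_cases case1 : 0 < j % (a * a) ∨ l = 1
    · by_cases case2 : 0 < j' % (a * a) ∨ l = 1
      · have k1 := hkey j hjN hjc case1
        have k2 := hkey j' hj'N hj'c case2
        have hp : (j % (a * a) + a * a - 1) % (a * a) < a * a := Nat.mod_lt _ hm
        have hp' : (j' % (a * a) + a * a - 1) % (a * a) < a * a := Nat.mod_lt _ hm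
        have hyb := hblock (c / a) hil _ hp
        have hDc : (D (c / a)).getD (j % (a * a)) 0 = c := by
          have := hTget j hjN
          rw [hocc j hjN hjc] at this
          rw [← this]; exact hjc
        have hDc' : (D (c / a)).getD (j' % (a * a)) 0 = c := by
          have := hTget j' hj'N
          rw [hocc j' hj'N hj'c] at this
          rw [← this]; exact hj'c
        have hpp' := huniq _ hyb.1 hyb.2 _ _ hp hp' rfl
          (by rw [hsucc _ hrm]; exact hDc)
          (by rw [← k1, hgg, k2])
          (by rw [hsucc _ hr'm]; exact hDc')
        rw [← hsucc _ hrm, ← hsucc _ hr'm, hpp']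
      · have hl2 : 1 < l := by
          rcases Nat.eq_or_lt_of_le hl with h | h
          · exact absurd (Or.inr h.symm) case2
          · exact h
        have hr'0 : j' % (a * a) = 0 := by push_neg at case2; omega
        have k1 := hkey j hjN hjc case1
        obtain ⟨b, hbl, hbne, hb1, hb2⟩ := hbad j' hj'N hj'c hr'0 hl2
        have hyb := hblock (c / a) hil _ (Nat.mod_lt (j % (a * a) + a * a - 1) hm)
        rw [← k1, hgg] at hyb
        exfalso
        rcases Nat.lt_or_ge b (c / a) with h | h
        · have : a * (b + 1) ≤ a * (c / a) := Nat.mul_le_mul_left a (by omega)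
          omega
        · have : a * (c / a + 1) ≤ a * b := Nat.mul_le_mul_left a (by omega)
          omega
    · by_cases case2 : 0 < j' % (a * a) ∨ l = 1
      · have hl2 : 1 < l := by
          rcases Nat.eq_or_lt_of_le hl with h | h
          · exact absurd (Or.inr h.symm) case1
          · exact h
        have hr0 : j % (a * a) = 0 := by push_neg at case1; omega
        have k2 := hkey j' hj'N hj'c case2
        obtain ⟨b, hbl, hbne, hb1, hb2⟩ := hbad j hjN hjc hr0 hl2
        have hyb := hblock (c / a) hil _ (Nat.mod_lt (j' % (a * a) + a * a - 1) hm)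
        rw [← k2, ← hgg] at hyb
        exfalso
        rcases Nat.lt_or_ge b (c / a) with h | h
        · have : a * (b + 1) ≤ a * (c / a) := Nat.mul_le_mul_left a (by omega)
          omega
        · have : a * (c / a + 1) ≤ a * b := Nat.mul_le_mul_left a (by omega)
          omega
      · push_neg at case1 case2
        omega
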